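/- For all ξ ≥ 2, ∑_{ℓ ≤ ξ} μ(ℓ)² log(ξ/ℓ)/ℓ = (3/π²)(log ξ)² + O(log ξ), with an absolute implied constant. -/

import Mathlib

open ArithmeticFunction
open scoped ArithmeticFunction.Moebius
open Finset Real

lemma sum_inv_Icc_eq_harmonic (n : ℕ) :
    ∑ m ∈ Icc 1 n, (1:ℝ)/m = (harmonic n : ℝ) := by
  rw [harmonic, ← Finset.Ico_add_one_right_eq_Icc, Finset.sum_Ico_eq_sum_range]
  push_cast
  refine Finset.sum_congr rfl fun k _ => ?_
  rw [one_div, add_comm]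

lemma harmonic_close (y : ℝ) (hy : 1 ≤ y) :
    |(∑ m ∈ Icc 1 ⌊y⌋₊, (1:ℝ)/m) - Real.log y| ≤ 1 := by
  set n := ⌊y⌋₊ with hn
  have hn1 : 1 ≤ n := Nat.one_le_floor_iff _ |>.mpr hy -- guess
  have hny : (n:ℝ) ≤ y := Nat.floor_le (by linarith)
  have hyn : y < n + 1 := Nat.lt_floor_add_one y
  rw [sum_inv_Icc_eq_harmonic]
  have h1 := log_add_one_le_harmonic n
  have h2 := harmonic_le_one_add_log n
  have h3 : Real.log y ≤ Real.log (n+1) := by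
    apply Real.log_le_log (by linarith) (by push_cast; linarith)
  have h4 : Real.log n ≤ Real.log y := Real.log_le_log (by positivity) hny
  rw [abs_le]
  constructor
  · push_cast at h1 ⊢; linarith
  · linarith

-- telescoping sums
lemma sum_inv_sq_le (n : ℕ) : ∑ d ∈ Icc 1 n, (1:ℝ)/(d^2) ≤ 2 := by
  have key : ∀ n : ℕ, 1 ≤ n → ∑ d ∈ Icc 1 n, (1:ℝ)/(d^2) ≤ 2 - 1/n := by
    intro n hn
    induction n with
    | zero => omega
    | succ m ih =>
      rcases Nat.eq_or_lt_of_le hn with h | h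
      · simp [← h]; norm_num
      · have hm : 1 ≤ m := by omega
        rw [← Finset.Ico_add_one_right_eq_Icc, Finset.sum_Ico_succ_top (by omega), Finset.Ico_add_one_right_eq_Icc]
        have hm' : (0:ℝ) < m := by positivity
        have : (1:ℝ)/((m+1)^2) ≤ 1/m - 1/(m+1) := by
          rw [div_sub_div _ _ (ne_of_gt hm') (by positivity)]
          rw [div_le_div_iff₀ (by positivity) (by positivity)]
          ring_nf
          nlinarith
        have := ih hm
        push_cast
        push_cast at this
        linarith
  rcases Nat.eq_zero_or_pos n with h | h
  · simp [h]
  · have := key n h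
    have : (0:ℝ) < 1/n := by positivity
    linarith [key n h]

lemma sum_inv_sq_tail (D E : ℕ) (hD : 1 ≤ D) (hDE : D ≤ E) :
    ∑ d ∈ Ioc D E, (1:ℝ)/(d^2) ≤ 1/D - 1/E := by
  induction E, hDE using Nat.le_induction with
  | base => simp
  | succ m hm ih =>
    rw [Finset.sum_Ioc_succ_top hm]
    have hm' : (0:ℝ) < m := by have : 1 ≤ m := le_trans hD hm; positivity
    have h1 : (1:ℝ)/((m+1)^2) ≤ 1/m - 1/(m+1) := by
      rw [div_sub_div _ _ (ne_of_gt hm') (by positivity),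
        div_le_div_iff₀ (by positivity) (by positivity)]
      ring_nf; nlinarith
    push_cast
    push_cast at ih h1
    linarith


lemma logdiv_hasDeriv {t : ℝ} (ht : 0 < t) :
    HasDerivAt (fun x => Real.log x / x) ((1 - Real.log t)/t^2) t := by
  have h1 : HasDerivAt Real.log t⁻¹ t := Real.hasDerivAt_log (ne_of_gt ht)
  have h2 : HasDerivAt (fun x : ℝ => x) 1 t := hasDerivAt_id t
  have := h1.div h2 (ne_of_gt ht)
  refine this.congr_deriv ?_
  field_simp

lemma logdiv_antitoneOn (M : ℝ) : AntitoneOn (fun x => Real.log x / x) (Set.Icc 3 M) := by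
  rcases le_or_gt M 3 with h | h
  · intro a ha b hb hab
    have : a = b := le_antisymm hab (by
      have := ha.1; have := ha.2; have := hb.1; have := hb.2; linarith)
    rw [this]
  · apply antitoneOn_of_deriv_nonpos (convex_Icc _ _)
    · apply ContinuousOn.div
      · exact Real.continuousOn_log.mono (by intro x hx; simp at hx ⊢; intro h0; linarith [hx.1])
      · exact continuousOn_id
      · intro x hx; have := hx.1; simp at this ⊢; linarith
    · intro x hx
      rw [interior_Icc] at hx
      exact (logdiv_hasDeriv (by linarith [hx.1])).differentiableAt.differentiableWithinAt
    · intro x hx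
      rw [interior_Icc] at hx
      have hx3 : (3:ℝ) < x := hx.1
      rw [(logdiv_hasDeriv (by linarith)).deriv]
      have : 1 ≤ Real.log x := by
        rw [Real.le_log_iff_exp_le (by linarith)]
        calc Real.exp 1 ≤ 2.7182818286 := Real.exp_one_lt_d9.le
        _ ≤ x := by linarith
      apply div_nonpos_of_nonpos_of_nonneg (by linarith) (by positivity)

lemma logdiv_integral {c : ℝ} (hc : 3 ≤ c) :
    ∫ t in (3:ℝ)..c, Real.log t / t = (Real.log c)^2/2 - (Real.log 3)^2/2 := by
  have : ∀ x ∈ Set.uIcc (3:ℝ) c, HasDerivAt (fun t => (Real.log t)^2/2) (Real.log x / x) x := by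
    intro x hx
    rw [Set.uIcc_of_le hc] at hx
    have hx0 : (0:ℝ) < x := by linarith [hx.1]
    have h1 : HasDerivAt Real.log x⁻¹ x := Real.hasDerivAt_log (ne_of_gt hx0)
    have := (h1.pow 2).div_const 2
    refine this.congr_deriv ?_
    field_simp
    ring
  rw [intervalIntegral.integral_eq_sub_of_hasDerivAt this]
  apply ContinuousOn.intervalIntegrable
  apply ContinuousOn.div
  · exact Real.continuousOn_log.mono (by
      intro x hx; rw [Set.uIcc_of_le hc] at hx; simp at hx ⊢; intro h0; linarith [hx.1])
  · exact continuousOn_id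
  · intro x hx; rw [Set.uIcc_of_le hc] at hx; have := hx.1; simp; linarith

lemma sum_log_close (n : ℕ) :
    |(∑ m ∈ Icc 1 n, Real.log m/(m:ℝ)) - (Real.log n)^2/2| ≤ 2 := by
  have log2 : 0 ≤ Real.log 2 ∧ Real.log 2 ≤ 1 := by
    constructor
    · exact Real.log_nonneg (by norm_num)
    · linarith [Real.log_le_sub_one_of_pos (by norm_num : (0:ℝ) < 2)]
  have log3 : 0 ≤ Real.log 3 ∧ Real.log 3 ≤ 2 := by
    constructor
    · exact Real.log_nonneg (by norm_num)
    · linarith [Real.log_le_sub_one_of_pos (by norm_num : (0:ℝ) < 3)]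
  rcases lt_or_ge n 3 with h3 | h3
  · interval_cases n
    · simp
    · simp
    · rw [show (Icc 1 2 : Finset ℕ) = {1, 2} from rfl]
      rw [Finset.sum_insert (by norm_num), Finset.sum_singleton]
      simp only [Nat.cast_one, Real.log_one, Nat.cast_ofNat]
      rw [abs_le]; constructor <;> nlinarith [log2.1, log2.2]
  · -- n ≥ 3
    have hn3 : (3:ℝ) ≤ n := by exact_mod_cast h3
    have hint := logdiv_integral hn3
    have hcast : (3:ℝ) + ((n - 3 : ℕ):ℝ) = (n:ℝ) := by
      push_cast [Nat.cast_sub h3]; ring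
    -- upper bound
    have hsplit : ∑ m ∈ Icc 1 n, Real.log m/(m:ℝ)
        = (∑ m ∈ (Icc 1 3 : Finset ℕ), Real.log m/(m:ℝ)) + ∑ m ∈ Icc 4 n, Real.log m/(m:ℝ) := by
      rw [← Finset.sum_union (by
        rw [Finset.disjoint_left]; intro a ha hb
        simp at ha hb; omega)]
      congr 1
      ext a; simp; omega
    have hup : ∑ m ∈ Icc 4 n, Real.log m/(m:ℝ) ≤ ∫ t in (3:ℝ)..(3 + ((n-3:ℕ):ℝ)), Real.log t / t := by
      have hanti := logdiv_antitoneOn (3 + ((n-3:ℕ):ℝ))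
      have := hanti.sum_le_integral (x₀ := 3) (a := n - 3)
      refine le_trans (le_of_eq ?_) this
      rw [← Finset.Ico_add_one_right_eq_Icc, Finset.sum_Ico_eq_sum_range]
      apply Finset.sum_congr (by congr 1 <;> omega) fun i hi => ?_
      push_cast
      try ring_nf
    have hlow : (∫ t in (3:ℝ)..(3 + ((n-3:ℕ):ℝ)), Real.log t / t) ≤ ∑ m ∈ Icc 1 n, Real.log m/(m:ℝ) := by
      have hanti := logdiv_antitoneOn (3 + ((n-3:ℕ):ℝ))
      have h1 := hanti.integral_le_sum (x₀ := 3) (a := n - 3)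
      refine le_trans h1 ?_
      have heq : ∑ i ∈ range (n-3), (fun x => Real.log x / x) (3 + (i:ℕ)) = ∑ m ∈ Ico 3 n, Real.log m/(m:ℝ) := by
        rw [Finset.sum_Ico_eq_sum_range]
        apply Finset.sum_congr (by congr 1) fun i hi => ?_
        push_cast
        try ring_nf
      rw [heq]
      apply Finset.sum_le_sum_of_subset_of_nonneg
      · intro a ha; simp at ha ⊢; omega
      · intro m hm _
        rcases Nat.eq_zero_or_pos m with h | h
        · simp [h]
        · have : (1:ℝ) ≤ m := by exact_mod_cast h
          have : 0 ≤ Real.log m := Real.log_nonneg this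
          positivity
    rw [hcast] at hup hlow
    rw [hint] at hup hlow
    have hIcc13 : ∑ m ∈ (Icc 1 3 : Finset ℕ), Real.log m/(m:ℝ) = Real.log 2/2 + Real.log 3/3 := by
      rw [show (Icc 1 3 : Finset ℕ) = {1, 2, 3} from rfl]
      rw [Finset.sum_insert (by norm_num), Finset.sum_insert (by norm_num), Finset.sum_singleton]
      push_cast
      simp [Real.log_one]
    rw [abs_le]
    constructor
    · nlinarith [log3.1, log3.2]
    · rw [hsplit, hIcc13]
      nlinarith [log2.1, log2.2, log3.1, log3.2]


noncomputable def Tsum (y : ℝ) : ℝ := ∑ m ∈ Icc 1 ⌊y⌋₊, Real.log (y/m) / m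

lemma Tsum_close (y : ℝ) (hy : 1 ≤ y) :
    |Tsum y - (Real.log y)^2/2| ≤ Real.log y + 4 := by
  set n := ⌊y⌋₊ with hn
  have hn1 : 1 ≤ n := Nat.one_le_floor_iff _ |>.mpr hy
  have hny : (n:ℝ) ≤ y := Nat.floor_le (by linarith)
  have hyn : y < n + 1 := Nat.lt_floor_add_one y
  have hn0 : (0:ℝ) < n := by exact_mod_cast hn1
  have hy0 : (0:ℝ) < y := by linarith
  have hsplit : Tsum y = Real.log y * (∑ m ∈ Icc 1 n, (1:ℝ)/m)
      - ∑ m ∈ Icc 1 n, Real.log m/(m:ℝ) := by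
    rw [Tsum, Finset.mul_sum, ← Finset.sum_sub_distrib]
    apply Finset.sum_congr rfl fun m hm => ?_
    have hm1 : 1 ≤ m := (Finset.mem_Icc.mp hm).1
    have hm0 : (m:ℝ) ≠ 0 := by positivity
    rw [Real.log_div (ne_of_gt hy0) hm0]
    field_simp
    try ring
  have h1 := harmonic_close y hy
  rw [← hn] at h1
  have h2 := sum_log_close n
  -- |log^2 n/2 - log^2 y /2| ≤ 1
  have hlogn : 0 ≤ Real.log n := Real.log_nonneg (by exact_mod_cast hn1)
  have hlogy : 0 ≤ Real.log y := Real.log_nonneg hy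
  have hmono : Real.log n ≤ Real.log y := Real.log_le_log hn0 hny
  have hup : Real.log y ≤ Real.log n + 1/n := by
    have : Real.log y ≤ Real.log (n+1) := Real.log_le_log hy0 (by linarith)
    have h4 : Real.log ((n+1)/n) ≤ (n+1)/(n:ℝ) - 1 := Real.log_le_sub_one_of_pos (by positivity)
    rw [Real.log_div (by positivity) (ne_of_gt hn0)] at h4
    have : ((n:ℝ)+1)/n - 1 = 1/n := by field_simp; ring
    linarith [this]
  have hlogn_le : Real.log n ≤ (n:ℝ) := by
    linarith [Real.log_le_sub_one_of_pos hn0]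
  have h3 : |(Real.log n)^2/2 - (Real.log y)^2/2| ≤ 2 := by
    rw [abs_le]
    constructor
    · have : (Real.log y)^2 - (Real.log n)^2 = (Real.log y + Real.log n)*(Real.log y - Real.log n) := by ring
      have hinv : 1/(n:ℝ) ≤ 1 := by
        rw [div_le_one hn0]; exact_mod_cast hn1
      have hb1 : Real.log y + Real.log n ≤ 2*(n:ℝ) + 1 := by linarith
      have hb2 : Real.log y - Real.log n ≤ 1/n := by linarith
      have hprod : (Real.log y + Real.log n)*(Real.log y - Real.log n) ≤ (2*(n:ℝ)+1)*(1/n) := by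
        apply mul_le_mul hb1 hb2 (by linarith) (by positivity)
      have : (2*(n:ℝ)+1)*(1/n) = 2 + 1/n := by field_simp
      nlinarith
    · nlinarith
  rw [hsplit]
  have habs1 : |Real.log y * (∑ m ∈ Icc 1 n, (1:ℝ)/m) - Real.log y * Real.log y| ≤ Real.log y := by
    rw [← mul_sub, abs_mul, abs_of_nonneg hlogy]
    calc Real.log y * |(∑ m ∈ Icc 1 n, (1:ℝ)/m) - Real.log y| ≤ Real.log y * 1 :=
      mul_le_mul_of_nonneg_left h1 hlogy
    _ = Real.log y := mul_one _
  calc |Real.log y * (∑ m ∈ Icc 1 n, (1:ℝ)/m) - (∑ m ∈ Icc 1 n, Real.log m/(m:ℝ)) - (Real.log y)^2/2|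
      = |(Real.log y * (∑ m ∈ Icc 1 n, (1:ℝ)/m) - Real.log y * Real.log y)
        + ((Real.log n)^2/2 - (∑ m ∈ Icc 1 n, Real.log m/(m:ℝ)))
        + ((Real.log y)^2/2 - (Real.log n)^2/2)| := by congr 1; ring
  _ ≤ |Real.log y * (∑ m ∈ Icc 1 n, (1:ℝ)/m) - Real.log y * Real.log y|
        + |(Real.log n)^2/2 - (∑ m ∈ Icc 1 n, Real.log m/(m:ℝ))|
        + |(Real.log y)^2/2 - (Real.log n)^2/2| := (abs_add_le _ _).trans (add_le_add_left (abs_add_le _ _) _)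
  _ ≤ Real.log y + 2 + 2 := by
      gcongr
      · rw [abs_sub_comm]; exact h2
      · rw [abs_sub_comm]; exact h3
  _ = Real.log y + 4 := by ring

open ArithmeticFunction

lemma moebius_sq_eq_sum (l : ℕ) (hl : l ≠ 0) :
    (μ l)^2 = ∑ d ∈ l.divisors.filter (fun d => d^2 ∣ l), μ d := by
  classical
  set f : ℕ →₀ ℕ := (Nat.factorization l).mapRange (· / 2) (Nat.zero_div 2) with hf
  have hfp : ∀ p ∈ f.support, p.Prime := by
    intro p hp
    have := Finsupp.support_mapRange (f := fun x => x / 2) (hf := rfl) (g := Nat.factorization l)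
    have hp2 : p ∈ (Nat.factorization l).support := this hp
    exact Nat.prime_of_mem_primeFactors (by rwa [Nat.support_factorization] at hp2)
  set r : ℕ := f.prod (· ^ ·) with hr
  have hrf : r.factorization = f := Nat.prod_pow_factorization_eq_self hfp
  have hr0 : r ≠ 0 := by
    rw [hr, Finsupp.prod]
    apply Finset.prod_ne_zero_iff.mpr
    intro p hp
    exact pow_ne_zero _ (hfp p hp).pos.ne'
  have key : ∀ d : ℕ, d ≠ 0 → (d ∣ r ↔ d^2 ∣ l) := by
    intro d hd
    rw [← Nat.factorization_le_iff_dvd hd hr0, hrf,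
      ← Nat.factorization_le_iff_dvd (pow_ne_zero 2 hd) hl, Nat.factorization_pow]
    constructor
    · intro h
      intro p
      have := h p
      simp only [Finsupp.mapRange_apply, hf] at this
      simp only [Finsupp.smul_apply, smul_eq_mul]
      omega
    · intro h p
      have := h p
      simp only [Finsupp.smul_apply, smul_eq_mul] at this
      simp only [Finsupp.mapRange_apply, hf]
      omega
  have hset : l.divisors.filter (fun d => d^2 ∣ l) = r.divisors := by
    ext d
    simp only [Finset.mem_filter, Nat.mem_divisors]
    constructor
    · rintro ⟨⟨hdl, _⟩, hd2⟩
      have hd0 : d ≠ 0 := by rintro rfl; simp at hdl ⊢; tauto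
      exact ⟨(key d hd0).mpr hd2, hr0⟩
    · rintro ⟨hdr, _⟩
      have hd0 : d ≠ 0 := by rintro rfl; exact hr0 (Nat.eq_zero_of_zero_dvd hdr)
      have hd2 : d^2 ∣ l := (key d hd0).mp hdr
      exact ⟨⟨dvd_trans (dvd_pow_self d two_ne_zero) hd2, hl⟩, hd2⟩
  rw [hset]
  have hsum : ∑ d ∈ r.divisors, μ d = if r = 1 then 1 else 0 := by
    have h := congrArg (fun g : ArithmeticFunction ℤ => g r) moebius_mul_coe_zeta
    simp only [coe_mul_zeta_apply, one_apply] at h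
    exact h
  rw [hsum]
  have hsqf : r = 1 ↔ Squarefree l := by
    rw [Nat.squarefree_iff_factorization_le_one hl]
    constructor
    · intro h1 p
      have : f = 0 := by rw [← hrf, h1, Nat.factorization_one]
      have := Finsupp.ext_iff.mp this p
      simp only [Finsupp.mapRange_apply, hf, Finsupp.coe_zero, Pi.zero_apply] at this
      omega
    · intro h
      have hfz : f = 0 := by
        ext p
        simp only [Finsupp.mapRange_apply, hf, Finsupp.coe_zero, Pi.zero_apply]
        have := h p
        omega
      rw [hr, hfz, Finsupp.prod_zero_index]
  by_cases hsq : Squarefree l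
  · rw [if_pos (hsqf.mpr hsq), moebius_apply_of_squarefree hsq, ← pow_mul, mul_comm, pow_mul]
    simp
  · rw [if_neg (fun h => hsq (hsqf.mp h)), moebius_eq_zero_of_not_squarefree hsq]
    simp


lemma swap_sum (ξ : ℝ) (hξ : 2 ≤ ξ) :
    ∑ l ∈ Icc 1 ⌊ξ⌋₊, (μ l : ℝ)^2 * Real.log (ξ/l)/l
      = ∑ d ∈ Icc 1 ⌊ξ⌋₊, (μ d : ℝ)/(d:ℝ)^2 * Tsum (ξ/(d:ℝ)^2) := by
  set N := ⌊ξ⌋₊ with hN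
  have hξ0 : (0:ℝ) < ξ := by linarith
  -- Step A: expand μ² as divisor sum
  have stepA : ∑ l ∈ Icc 1 N, (μ l : ℝ)^2 * Real.log (ξ/l)/l
      = ∑ l ∈ Icc 1 N, ∑ d ∈ l.divisors.filter (fun d => d^2 ∣ l),
          (μ d : ℝ) * (Real.log (ξ/l)/l) := by
    apply Finset.sum_congr rfl
    intro l hl
    have hl1 : 1 ≤ l := (Finset.mem_Icc.mp hl).1
    have := moebius_sq_eq_sum l (by omega)
    have hcast : ((μ l : ℝ))^2 = ((∑ d ∈ l.divisors.filter (fun d => d^2 ∣ l), μ d : ℤ) : ℝ) := by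
      rw [← this]; push_cast; ring
    rw [mul_div_assoc, hcast, Int.cast_sum, Finset.sum_mul]
  rw [stepA]
  -- Step B: reindex pairs (l, d) ↦ (d, m = l / d²)
  have stepB : ∑ l ∈ Icc 1 N, ∑ d ∈ l.divisors.filter (fun d => d^2 ∣ l),
          (μ d : ℝ) * (Real.log (ξ/l)/l)
      = ∑ d ∈ Icc 1 N, ∑ m ∈ Icc 1 (N / d^2),
          (μ d : ℝ) * (Real.log (ξ/((d^2*m : ℕ) : ℝ))/((d^2*m : ℕ) : ℝ)) := by
    rw [Finset.sum_sigma', Finset.sum_sigma']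
    apply Finset.sum_nbij' (fun p => ⟨p.2, p.1 / p.2^2⟩) (fun p => ⟨p.1^2 * p.2, p.1⟩)
    · rintro ⟨l, d⟩ hp
      simp only [Finset.mem_sigma, Finset.mem_Icc, Finset.mem_filter, Nat.mem_divisors] at hp ⊢
      obtain ⟨⟨hl1, hlN⟩, ⟨hdl, hl0⟩, hd2⟩ := hp
      have hd1 : 1 ≤ d := Nat.one_le_iff_ne_zero.mpr (by rintro rfl; simp at hdl; omega)
      have hd2l : d^2 ≤ l := Nat.le_of_dvd (by omega) hd2
      refine ⟨⟨hd1, le_trans (Nat.le_of_dvd (by omega) hdl) hlN⟩, ?_, ?_⟩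
      · rw [Nat.one_le_div_iff (by positivity)]; exact hd2l
      · exact Nat.div_le_div_right hlN
    · rintro ⟨d, m⟩ hp
      simp only [Finset.mem_sigma, Finset.mem_Icc, Finset.mem_filter, Nat.mem_divisors] at hp ⊢
      obtain ⟨⟨hd1, hdN⟩, hm1, hmN⟩ := hp
      have hd2 : 0 < d^2 := by positivity
      have hl : d^2 * m ≤ N := by
        rw [Nat.le_div_iff_mul_le hd2] at hmN
        calc d^2 * m = m * d^2 := mul_comm _ _
        _ ≤ N := hmN
      have hpos : 0 < d^2 * m := Nat.mul_pos (pow_pos hd1 2) hm1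
      refine ⟨⟨hpos, hl⟩, ⟨⟨dvd_mul_of_dvd_left (dvd_pow_self d two_ne_zero) m, by omega⟩, dvd_mul_right _ _⟩⟩
    · rintro ⟨l, d⟩ hp
      simp only [Finset.mem_sigma, Finset.mem_Icc, Finset.mem_filter, Nat.mem_divisors] at hp
      obtain ⟨_, _, hd2⟩ := hp
      simp only [Sigma.mk.inj_iff]
      exact ⟨Nat.mul_div_cancel' hd2, HEq.rfl⟩
    · rintro ⟨d, m⟩ hp
      simp only [Finset.mem_sigma, Finset.mem_Icc] at hp
      have hd1 : 1 ≤ d := hp.1.1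
      simp only [Sigma.mk.inj_iff]
      exact ⟨trivial, heq_of_eq (Nat.mul_div_cancel_left m (pow_pos hd1 2))⟩
    · rintro ⟨l, d⟩ hp
      simp only [Finset.mem_sigma, Finset.mem_Icc, Finset.mem_filter, Nat.mem_divisors] at hp
      obtain ⟨_, _, hd2⟩ := hp
      simp only []
      rw [Nat.mul_div_cancel' hd2]
  rw [stepB]
  -- Step C: inner sum is Tsum
  apply Finset.sum_congr rfl
  intro d hd
  have hd1 : 1 ≤ d := (Finset.mem_Icc.mp hd).1
  have hd0 : (0:ℝ) < d := by exact_mod_cast hd1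
  have hfloor : ⌊ξ/(d:ℝ)^2⌋₊ = N / d^2 := by
    rw [hN, show ((d:ℝ)^2) = ((d^2 : ℕ) : ℝ) by push_cast; ring, Nat.floor_div_natCast]
  rw [Tsum, hfloor, Finset.mul_sum]
  apply Finset.sum_congr rfl
  intro m hm
  have hm1 : 1 ≤ m := (Finset.mem_Icc.mp hm).1
  have hm0 : (0:ℝ) < m := by exact_mod_cast hm1
  have harg : ξ/((d^2*m : ℕ) : ℝ) = (ξ/(d:ℝ)^2)/m := by
    push_cast
    rw [div_div]
  rw [harg]
  push_cast
  field_simp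
  try ring


lemma sum_inv_pow32_le (n : ℕ) : ∑ d ∈ Icc 1 n, 1/((d:ℝ) * Real.sqrt d) ≤ 3 := by
  have key : ∀ n : ℕ, 1 ≤ n → ∑ d ∈ Icc 1 n, 1/((d:ℝ) * Real.sqrt d) ≤ 3 - 2/Real.sqrt n := by
    intro n hn
    induction n with
    | zero => omega
    | succ m ih =>
      rcases Nat.eq_or_lt_of_le hn with h | h
      · simp [← h]; norm_num
      · have hm : 1 ≤ m := by omega
        rw [← Finset.Ico_add_one_right_eq_Icc, Finset.sum_Ico_succ_top (by omega), Finset.Ico_add_one_right_eq_Icc]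
        set a := Real.sqrt m with ha
        set b := Real.sqrt (m+1) with hb
        have ha2 : a^2 = m := Real.sq_sqrt (by positivity)
        have hb2 : b^2 = (m:ℝ)+1 := by
          rw [hb]; push_cast; exact Real.sq_sqrt (by positivity)
        have ha0 : 0 < a := Real.sqrt_pos.mpr (by exact_mod_cast hm)
        have hb0 : 0 < b := Real.sqrt_pos.mpr (by positivity)
        have hab : a ≤ b := Real.sqrt_le_sqrt (by push_cast; linarith)
        have step : 1/(((m:ℝ)+1) * b) ≤ 2/a - 2/b := by
          rw [div_sub_div _ _ (ne_of_gt ha0) (ne_of_gt hb0),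
            div_le_div_iff₀ (by nlinarith) (by positivity)]
          nlinarith [mul_pos ha0 hb0, sq_nonneg (a-b), sq_nonneg (a+b)]
        have := ih hm
        push_cast
        push_cast at this step
        linarith
  rcases Nat.eq_zero_or_pos n with h | h
  · simp [h]
  · have h2 := key n h
    have : (0:ℝ) < 2/Real.sqrt n := by positivity
    linarith

lemma log_le_two_sqrt {x : ℝ} (hx : 0 < x) : Real.log x ≤ 2 * Real.sqrt x := by
  have h := Real.log_sqrt hx.le
  have h2 := Real.log_le_sub_one_of_pos (Real.sqrt_pos.mpr hx)
  nlinarith [Real.sqrt_nonneg x]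

lemma sq_log_le {x : ℝ} (hx : 1 ≤ x) : (Real.log x)^2 ≤ 16 * Real.sqrt x := by
  have h0 : (0:ℝ) < x := by linarith
  have h1 : Real.log x ≤ 4 * Real.sqrt (Real.sqrt x) := by
    have := log_le_two_sqrt (x := Real.sqrt x) (Real.sqrt_pos.mpr h0)
    have h := Real.log_sqrt h0.le
    nlinarith
  have hlx : 0 ≤ Real.log x := Real.log_nonneg hx
  have h2 : (Real.sqrt (Real.sqrt x))^2 = Real.sqrt x := Real.sq_sqrt (Real.sqrt_nonneg x)
  nlinarith [Real.sqrt_nonneg (Real.sqrt x)]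

lemma sum_log_div_sq_le (n : ℕ) : ∑ d ∈ Icc 1 n, Real.log d/(d:ℝ)^2 ≤ 6 := by
  have h : ∀ d ∈ Icc 1 n, Real.log d/(d:ℝ)^2 ≤ 2 * (1/((d:ℝ) * Real.sqrt d)) := by
    intro d hd
    have hd1 : 1 ≤ d := (Finset.mem_Icc.mp hd).1
    have hd0 : (0:ℝ) < d := by exact_mod_cast hd1
    have hs : Real.sqrt d * ((d:ℝ) * Real.sqrt d) = (d:ℝ)^2 := by
      have : Real.sqrt d * Real.sqrt d = (d:ℝ) := Real.mul_self_sqrt hd0.le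
      nlinarith
    rw [div_le_iff₀ (by positivity)] at *
    calc Real.log d ≤ 2 * Real.sqrt d := log_le_two_sqrt hd0
    _ = 2 * (1/((d:ℝ) * Real.sqrt d)) * (d:ℝ)^2 := by
        field_simp
        nlinarith [Real.sqrt_nonneg (d:ℝ)]
  calc ∑ d ∈ Icc 1 n, Real.log d/(d:ℝ)^2 ≤ ∑ d ∈ Icc 1 n, 2 * (1/((d:ℝ) * Real.sqrt d)) :=
      Finset.sum_le_sum h
  _ = 2 * ∑ d ∈ Icc 1 n, 1/((d:ℝ) * Real.sqrt d) := by rw [Finset.mul_sum]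
  _ ≤ 2 * 3 := by have := sum_inv_pow32_le n; linarith
  _ = 6 := by norm_num

lemma sum_sq_log_div_sq_le (n : ℕ) : ∑ d ∈ Icc 1 n, (Real.log d)^2/(d:ℝ)^2 ≤ 48 := by
  have h : ∀ d ∈ Icc 1 n, (Real.log d)^2/(d:ℝ)^2 ≤ 16 * (1/((d:ℝ) * Real.sqrt d)) := by
    intro d hd
    have hd1 : 1 ≤ d := (Finset.mem_Icc.mp hd).1
    have hd0 : (0:ℝ) < d := by exact_mod_cast hd1
    have hd1' : (1:ℝ) ≤ d := by exact_mod_cast hd1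
    rw [div_le_iff₀ (by positivity)]
    calc (Real.log d)^2 ≤ 16 * Real.sqrt d := sq_log_le hd1'
    _ = 16 * (1/((d:ℝ) * Real.sqrt d)) * (d:ℝ)^2 := by
        have hss : Real.sqrt d * Real.sqrt d = (d:ℝ) := Real.mul_self_sqrt hd0.le
        field_simp
        nlinarith [Real.sqrt_nonneg (d:ℝ)]
  calc ∑ d ∈ Icc 1 n, (Real.log d)^2/(d:ℝ)^2 ≤ ∑ d ∈ Icc 1 n, 16 * (1/((d:ℝ) * Real.sqrt d)) :=
      Finset.sum_le_sum h
  _ = 16 * ∑ d ∈ Icc 1 n, 1/((d:ℝ) * Real.sqrt d) := by rw [Finset.mul_sum]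
  _ ≤ 16 * 3 := by have := sum_inv_pow32_le n; linarith
  _ = 48 := by norm_num

open Filter Topology

lemma moebius_summable : Summable (fun n : ℕ => (μ n : ℝ)/(n:ℝ)^2) := by
  apply Summable.of_norm_bounded (g := fun n : ℕ => 1/(n:ℝ)^2)
  · exact (Real.summable_one_div_nat_pow).mpr one_lt_two
  · intro n
    rcases Nat.eq_zero_or_pos n with h | h
    · simp [h]
    · rw [Real.norm_eq_abs, abs_div, abs_of_nonneg (by positivity : (0:ℝ) ≤ (n:ℝ)^2)]
      apply div_le_div_of_nonneg_right ?_ (by positivity)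
      have := abs_moebius_le_one (n := n)
      exact_mod_cast this

lemma moebius_tsum : ∑' n : ℕ, (μ n : ℝ)/(n:ℝ)^2 = 6/Real.pi^2 := by
  have h2 : (1:ℝ) < (2:ℂ).re := by norm_num
  have hζ := LSeries_zeta_eq_riemannZeta (s := 2) h2
  have hmul := LSeries_zeta_mul_Lseries_moebius (s := 2) h2
  rw [hζ, riemannZeta_two] at hmul
  have hpi : ((Real.pi:ℂ))^2/6 ≠ 0 := by
    have : Real.pi ≠ 0 := Real.pi_ne_zero
    simp [this]
  have hpi2 : ((Real.pi:ℂ))^2 ≠ 0 := by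
    have : Real.pi ≠ 0 := Real.pi_ne_zero
    simp [this]
  have hL : LSeries (fun n => (μ n : ℂ)) 2 = 6/(Real.pi:ℂ)^2 := by
    rw [eq_div_iff hpi2]
    field_simp at hmul
    linear_combination hmul
  have hterm : LSeries (fun n => (μ n : ℂ)) 2 = ∑' n : ℕ, (μ n : ℂ)/(n:ℂ)^2 := by
    rw [LSeries]
    apply tsum_congr
    intro n
    rcases Nat.eq_zero_or_pos n with h | h
    · simp [h, LSeries.term]
    · rw [LSeries.term_of_ne_zero (by omega)]
      congr 1
      rw [show (2:ℂ) = ((2:ℕ):ℂ) by norm_num, Complex.cpow_natCast]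
  have hreal : ((∑' n : ℕ, (μ n : ℝ)/(n:ℝ)^2 : ℝ) : ℂ) = ∑' n : ℕ, (μ n : ℂ)/(n:ℂ)^2 := by
    rw [Complex.ofReal_tsum]
    apply tsum_congr
    intro n
    push_cast
    ring
  have : ((∑' n : ℕ, (μ n : ℝ)/(n:ℝ)^2 : ℝ) : ℂ) = ((6/Real.pi^2 : ℝ) : ℂ) := by
    rw [hreal, ← hterm, hL]
    push_cast
    ring
  exact_mod_cast this

lemma moebius_partial_close (D : ℕ) (hD : 1 ≤ D) :
    |(∑ d ∈ Icc 1 D, (μ d : ℝ)/(d:ℝ)^2) - 6/Real.pi^2| ≤ 1/(D:ℝ) := by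
  set f : ℕ → ℝ := fun n => (μ n : ℝ)/(n:ℝ)^2 with hf
  set A : ℕ → ℝ := fun E => ∑ d ∈ Icc 1 E, f d with hA
  have hsum := moebius_summable
  have hten : Tendsto A atTop (𝓝 (6/Real.pi^2)) := by
    rw [← moebius_tsum]
    have h1 : Tendsto (fun n => ∑ i ∈ range n, f i) atTop (𝓝 (∑' n, f n)) :=
      hsum.hasSum.tendsto_sum_nat
    have h2 := h1.comp (tendsto_add_atTop_nat 1)
    have heq : A = (fun n => ∑ i ∈ range n, f i) ∘ (· + 1) := by
      funext E
      show ∑ d ∈ Icc 1 E, f d = ∑ i ∈ range (E+1), f i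
      rw [Finset.range_eq_Ico, Finset.sum_eq_sum_Ico_succ_bot (Nat.succ_pos E),
        show f 0 = 0 by simp [hf], zero_add, Nat.succ_eq_add_one, Finset.Ico_add_one_right_eq_Icc]
    rw [heq]
    exact h2
  have hbound : ∀ᶠ E in atTop, |A D - A E| ≤ 1/D := by
    filter_upwards [eventually_ge_atTop D] with E hE
    have hsplit : A E = A D + ∑ d ∈ Ioc D E, f d := by
      rw [hA]
      show ∑ d ∈ Icc 1 E, f d = ∑ d ∈ Icc 1 D, f d + ∑ d ∈ Ioc D E, f d
      rw [← Finset.sum_union (by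
        rw [Finset.disjoint_left]; intro a ha hb
        simp at ha hb; omega)]
      congr 1
      ext a
      simp only [Finset.mem_Icc, Finset.mem_Ioc, Finset.mem_union]
      omega
    rw [hsplit]
    have : |A D - (A D + ∑ d ∈ Ioc D E, f d)| = |∑ d ∈ Ioc D E, f d| := by
      rw [← abs_neg]; congr 1; ring
    rw [this]
    calc |∑ d ∈ Ioc D E, f d| ≤ ∑ d ∈ Ioc D E, |f d| := Finset.abs_sum_le_sum_abs _ _
    _ ≤ ∑ d ∈ Ioc D E, (1:ℝ)/(d:ℝ)^2 := by
        apply Finset.sum_le_sum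
        intro d hd
        have hd1 : 1 ≤ d := by have := (Finset.mem_Ioc.mp hd).1; omega
        rw [hf, abs_div, abs_of_nonneg (by positivity : (0:ℝ) ≤ (d:ℝ)^2)]
        apply div_le_div_of_nonneg_right ?_ (by positivity)
        have := abs_moebius_le_one (n := d)
        exact_mod_cast this
    _ ≤ 1/D - 1/E := sum_inv_sq_tail D E hD hE
    _ ≤ 1/D := by
        have : (0:ℝ) ≤ 1/E := by positivity
        linarith
  have htend2 : Tendsto (fun E => |A D - A E|) atTop (𝓝 |A D - 6/Real.pi^2|) :=
    ((tendsto_const_nhds.sub hten).abs)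
  show |A D - 6/Real.pi^2| ≤ 1/(D:ℝ)
  exact le_of_tendsto htend2 hbound


set_option maxHeartbeats 2000000 in
/-- For all `ξ ≥ 2`,
`∑_{ℓ ≤ ξ} μ(ℓ)² log(ξ/ℓ)/ℓ = (3/π²)(log ξ)² + O(log ξ)`, with an absolute
implied constant. -/
theorem squarefree_log_weighted_sum :
    ∃ C : ℝ, 0 < C ∧ ∀ ξ : ℝ, 2 ≤ ξ →
      |(∑ l ∈ Finset.Icc 1 ⌊ξ⌋₊,
            (moebius l : ℝ) ^ 2 * Real.log (ξ / l) / l)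
          - 3 / Real.pi ^ 2 * Real.log ξ ^ 2| ≤ C * Real.log ξ := by
  refine ⟨200, by norm_num, fun ξ hξ => ?_⟩
  have hξ0 : (0:ℝ) < ξ := by linarith
  have hξ1 : (1:ℝ) ≤ ξ := by linarith
  set N := ⌊ξ⌋₊ with hN
  set D := ⌊Real.sqrt ξ⌋₊ with hD
  have hsqrt1 : (1:ℝ) ≤ Real.sqrt ξ := by
    rw [show (1:ℝ) = Real.sqrt 1 by simp]
    exact Real.sqrt_le_sqrt hξ1
  have hD1 : 1 ≤ D := Nat.one_le_floor_iff _ |>.mpr hsqrt1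
  have hD0 : (0:ℝ) < D := by exact_mod_cast hD1
  have hsle : Real.sqrt ξ ≤ ξ := by
    have h := Real.sqrt_le_sqrt (show ξ ≤ ξ^2 by nlinarith)
    rwa [Real.sqrt_sq hξ0.le] at h
  have hDN : D ≤ N := Nat.floor_le_floor hsle
  have hlogξ : 0 ≤ Real.log ξ := Real.log_nonneg hξ1
  -- d ≤ D implies (d:ℝ)^2 ≤ ξ
  have hdsq : ∀ d : ℕ, 1 ≤ d → d ≤ D → (d:ℝ)^2 ≤ ξ := by
    intro d _ hdD
    have : (d:ℝ) ≤ Real.sqrt ξ := by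
      rw [hD] at hdD
      exact (Nat.le_floor_iff (Real.sqrt_nonneg ξ)).mp hdD
    calc (d:ℝ)^2 ≤ (Real.sqrt ξ)^2 := by nlinarith [Real.sqrt_nonneg ξ]
    _ = ξ := Real.sq_sqrt hξ0.le
  -- the swap
  rw [swap_sum ξ hξ]
  -- restrict to d ≤ D
  have hrestrict : ∑ d ∈ Icc 1 N, (μ d : ℝ)/(d:ℝ)^2 * Tsum (ξ/(d:ℝ)^2)
      = ∑ d ∈ Icc 1 D, (μ d : ℝ)/(d:ℝ)^2 * Tsum (ξ/(d:ℝ)^2) := by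
    symm
    apply Finset.sum_subset (Finset.Icc_subset_Icc_right hDN)
    intro d hdN hdD
    simp only [Finset.mem_Icc] at hdN hdD
    have hd1 : 1 ≤ d := hdN.1
    have hdD' : D < d := by omega
    have : Real.sqrt ξ < d := by
      have h2 : ⌊Real.sqrt ξ⌋₊ < d := hD ▸ hdD'
      exact Nat.lt_of_floor_lt h2
    have hd0 : (0:ℝ) < d := by exact_mod_cast hd1
    have hlt : ξ < (d:ℝ)^2 := by
      nlinarith [Real.sq_sqrt hξ0.le, Real.sqrt_nonneg ξ]
    have : ⌊ξ/(d:ℝ)^2⌋₊ = 0 := by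
      apply Nat.floor_eq_zero.mpr
      rw [div_lt_one (by positivity)]
      linarith
    rw [Tsum, this]
    simp
  rw [hrestrict]
  -- decompose Tsum into main + error
  have hsplit : ∑ d ∈ Icc 1 D, (μ d : ℝ)/(d:ℝ)^2 * Tsum (ξ/(d:ℝ)^2)
      = (∑ d ∈ Icc 1 D, (μ d : ℝ)/(d:ℝ)^2 * ((Real.log (ξ/(d:ℝ)^2))^2/2))
        + ∑ d ∈ Icc 1 D, (μ d : ℝ)/(d:ℝ)^2 * (Tsum (ξ/(d:ℝ)^2) - (Real.log (ξ/(d:ℝ)^2))^2/2) := by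
    rw [← Finset.sum_add_distrib]
    apply Finset.sum_congr rfl fun d hd => ?_
    ring
  rw [hsplit]
  -- bound the error sum
  have herr : |∑ d ∈ Icc 1 D, (μ d : ℝ)/(d:ℝ)^2 * (Tsum (ξ/(d:ℝ)^2) - (Real.log (ξ/(d:ℝ)^2))^2/2)|
      ≤ 2*(Real.log ξ + 4) := by
    calc |∑ d ∈ Icc 1 D, (μ d : ℝ)/(d:ℝ)^2 * (Tsum (ξ/(d:ℝ)^2) - (Real.log (ξ/(d:ℝ)^2))^2/2)|
        ≤ ∑ d ∈ Icc 1 D, |(μ d : ℝ)/(d:ℝ)^2 * (Tsum (ξ/(d:ℝ)^2) - (Real.log (ξ/(d:ℝ)^2))^2/2)| :=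
        Finset.abs_sum_le_sum_abs _ _
    _ ≤ ∑ d ∈ Icc 1 D, (1:ℝ)/(d:ℝ)^2 * (Real.log ξ + 4) := by
        apply Finset.sum_le_sum
        intro d hd
        obtain ⟨hd1, hdD⟩ := Finset.mem_Icc.mp hd
        have hd0 : (0:ℝ) < d := by exact_mod_cast hd1
        have hy1 : (1:ℝ) ≤ ξ/(d:ℝ)^2 := by
          rw [le_div_iff₀ (by positivity)]
          simpa using hdsq d hd1 hdD
        have hT := Tsum_close (ξ/(d:ℝ)^2) hy1
        have hylog : Real.log (ξ/(d:ℝ)^2) ≤ Real.log ξ := by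
          apply Real.log_le_log (by linarith)
          rw [div_le_iff₀ (by positivity)]
          have hd1r : (1:ℝ) ≤ (d:ℝ) := by exact_mod_cast hd1
          have hd2 : (1:ℝ) ≤ (d:ℝ)^2 := by nlinarith
          nlinarith [mul_le_mul_of_nonneg_left hd2 hξ0.le]
        rw [abs_mul, abs_div, abs_of_nonneg (by positivity : (0:ℝ) ≤ (d:ℝ)^2)]
        have h1 : |(μ d : ℝ)| ≤ 1 := by exact_mod_cast abs_moebius_le_one (n := d)
        apply mul_le_mul
        · apply div_le_div_of_nonneg_right h1 (by positivity) |>.trans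
          apply le_of_eq; rfl
        · exact hT.trans (by linarith)
        · exact abs_nonneg _
        · positivity
    _ = (Real.log ξ + 4) * ∑ d ∈ Icc 1 D, (1:ℝ)/(d:ℝ)^2 := by
        rw [Finset.mul_sum]; apply Finset.sum_congr rfl fun d hd => by ring
    _ ≤ (Real.log ξ + 4) * 2 := by
        apply mul_le_mul_of_nonneg_left (sum_inv_sq_le D) (by linarith)
    _ = 2*(Real.log ξ + 4) := by ring
  -- expand the main sum
  have hmain : ∑ d ∈ Icc 1 D, (μ d : ℝ)/(d:ℝ)^2 * ((Real.log (ξ/(d:ℝ)^2))^2/2)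
      = (Real.log ξ)^2/2 * (∑ d ∈ Icc 1 D, (μ d : ℝ)/(d:ℝ)^2)
        - 2*Real.log ξ * (∑ d ∈ Icc 1 D, (μ d : ℝ)*Real.log d/(d:ℝ)^2)
        + 2 * (∑ d ∈ Icc 1 D, (μ d : ℝ)*(Real.log d)^2/(d:ℝ)^2) := by
    rw [Finset.mul_sum, Finset.mul_sum, Finset.mul_sum, ← Finset.sum_sub_distrib,
      ← Finset.sum_add_distrib]
    apply Finset.sum_congr rfl fun d hd => ?_
    obtain ⟨hd1, hdD⟩ := Finset.mem_Icc.mp hd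
    have hd0 : (0:ℝ) < d := by exact_mod_cast hd1
    have hlog : Real.log (ξ/(d:ℝ)^2) = Real.log ξ - 2*Real.log d := by
      rw [Real.log_div (ne_of_gt hξ0) (by positivity), Real.log_pow]
      push_cast; ring
    rw [hlog]
    field_simp
    ring
  rw [hmain]
  -- bounds for A, B, C
  have hA := moebius_partial_close D hD1
  have hB : |∑ d ∈ Icc 1 D, (μ d : ℝ)*Real.log d/(d:ℝ)^2| ≤ 6 := by
    calc |∑ d ∈ Icc 1 D, (μ d : ℝ)*Real.log d/(d:ℝ)^2|
        ≤ ∑ d ∈ Icc 1 D, |(μ d : ℝ)*Real.log d/(d:ℝ)^2| := Finset.abs_sum_le_sum_abs _ _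
    _ ≤ ∑ d ∈ Icc 1 D, Real.log d/(d:ℝ)^2 := by
        apply Finset.sum_le_sum
        intro d hd
        obtain ⟨hd1, _⟩ := Finset.mem_Icc.mp hd
        have hd0 : (1:ℝ) ≤ d := by exact_mod_cast hd1
        have hlogd : 0 ≤ Real.log d := Real.log_nonneg hd0
        rw [abs_div, abs_mul, abs_of_nonneg hlogd, abs_of_nonneg (by positivity : (0:ℝ) ≤ (d:ℝ)^2)]
        apply div_le_div_of_nonneg_right ?_ (by positivity)
        have h1 : |(μ d : ℝ)| ≤ 1 := by exact_mod_cast abs_moebius_le_one (n := d)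
        nlinarith [abs_nonneg ((μ d : ℝ))]
    _ ≤ 6 := sum_log_div_sq_le D
  have hC : |∑ d ∈ Icc 1 D, (μ d : ℝ)*(Real.log d)^2/(d:ℝ)^2| ≤ 48 := by
    calc |∑ d ∈ Icc 1 D, (μ d : ℝ)*(Real.log d)^2/(d:ℝ)^2|
        ≤ ∑ d ∈ Icc 1 D, |(μ d : ℝ)*(Real.log d)^2/(d:ℝ)^2| := Finset.abs_sum_le_sum_abs _ _
    _ ≤ ∑ d ∈ Icc 1 D, (Real.log d)^2/(d:ℝ)^2 := by
        apply Finset.sum_le_sum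
        intro d hd
        obtain ⟨hd1, _⟩ := Finset.mem_Icc.mp hd
        rw [abs_div, abs_mul, abs_of_nonneg (by positivity : (0:ℝ) ≤ (Real.log d)^2),
          abs_of_nonneg (by positivity : (0:ℝ) ≤ (d:ℝ)^2)]
        apply div_le_div_of_nonneg_right ?_ (by positivity)
        have h1 : |(μ d : ℝ)| ≤ 1 := by exact_mod_cast abs_moebius_le_one (n := d)
        nlinarith [abs_nonneg ((μ d : ℝ)), sq_nonneg (Real.log d)]
    _ ≤ 48 := sum_sq_log_div_sq_le D
  -- main term vs 3/π² log²
  have hmain2 : |(Real.log ξ)^2/2 * (∑ d ∈ Icc 1 D, (μ d : ℝ)/(d:ℝ)^2)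
      - 3/Real.pi^2 * (Real.log ξ)^2| ≤ 16 := by
    have heq : (Real.log ξ)^2/2 * (∑ d ∈ Icc 1 D, (μ d : ℝ)/(d:ℝ)^2)
        - 3/Real.pi^2 * (Real.log ξ)^2
        = (Real.log ξ)^2/2 * ((∑ d ∈ Icc 1 D, (μ d : ℝ)/(d:ℝ)^2) - 6/Real.pi^2) := by
      ring
    rw [heq, abs_mul, abs_of_nonneg (by positivity : (0:ℝ) ≤ (Real.log ξ)^2/2)]
    have hsq : (Real.log ξ)^2 ≤ 16*Real.sqrt ξ := sq_log_le hξ1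
    have hsD : Real.sqrt ξ ≤ 2*D := by
      have := Nat.lt_floor_add_one (Real.sqrt ξ)
      rw [← hD] at this
      have : Real.sqrt ξ < D + 1 := this
      have hD1' : (1:ℝ) ≤ D := by exact_mod_cast hD1
      linarith
    calc (Real.log ξ)^2/2 * |(∑ d ∈ Icc 1 D, (μ d : ℝ)/(d:ℝ)^2) - 6/Real.pi^2|
        ≤ (16*Real.sqrt ξ)/2 * (1/(D:ℝ)) := by
          apply mul_le_mul (by linarith) hA (abs_nonneg _) (by positivity)
    _ ≤ 16 := by
        rw [div_mul_div_comm, div_le_iff₀ (by positivity)]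
        nlinarith [Real.sqrt_nonneg ξ]
  -- assemble
  have hlog2 : (0.6931471803:ℝ) ≤ Real.log ξ := by
    calc (0.6931471803:ℝ) ≤ Real.log 2 := Real.log_two_gt_d9.le
    _ ≤ Real.log ξ := Real.log_le_log (by norm_num) hξ
  set A := ∑ d ∈ Icc 1 D, (μ d : ℝ)/(d:ℝ)^2
  set B := ∑ d ∈ Icc 1 D, (μ d : ℝ)*Real.log d/(d:ℝ)^2
  set Cc := ∑ d ∈ Icc 1 D, (μ d : ℝ)*(Real.log d)^2/(d:ℝ)^2
  set E := ∑ d ∈ Icc 1 D, (μ d : ℝ)/(d:ℝ)^2 * (Tsum (ξ/(d:ℝ)^2) - (Real.log (ξ/(d:ℝ)^2))^2/2)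
  have habsB : |2*Real.log ξ * B| ≤ 12 * Real.log ξ := by
    rw [abs_mul, abs_of_nonneg (by positivity : (0:ℝ) ≤ 2*Real.log ξ)]
    nlinarith
  have key : |(Real.log ξ)^2/2 * A - 2*Real.log ξ * B + 2*Cc + E - 3/Real.pi^2 * (Real.log ξ)^2|
      ≤ 16 + 12*Real.log ξ + 96 + 2*(Real.log ξ + 4) := by
    have h1 : (Real.log ξ)^2/2 * A - 2*Real.log ξ * B + 2*Cc + E - 3/Real.pi^2 * (Real.log ξ)^2
        = ((Real.log ξ)^2/2 * A - 3/Real.pi^2 * (Real.log ξ)^2) + (-(2*Real.log ξ * B)) + 2*Cc + E := by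
      ring
    rw [h1]
    calc |((Real.log ξ)^2/2 * A - 3/Real.pi^2 * (Real.log ξ)^2) + (-(2*Real.log ξ * B)) + 2*Cc + E|
        ≤ |((Real.log ξ)^2/2 * A - 3/Real.pi^2 * (Real.log ξ)^2) + (-(2*Real.log ξ * B)) + 2*Cc| + |E| := abs_add_le _ _
    _ ≤ (|((Real.log ξ)^2/2 * A - 3/Real.pi^2 * (Real.log ξ)^2) + (-(2*Real.log ξ * B))| + |2*Cc|) + |E| := by
        gcongr; exact abs_add_le _ _
    _ ≤ ((|(Real.log ξ)^2/2 * A - 3/Real.pi^2 * (Real.log ξ)^2| + |(-(2*Real.log ξ * B))|) + |2*Cc|) + |E| := by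
        gcongr; exact abs_add_le _ _
    _ ≤ ((16 + 12*Real.log ξ) + 96) + 2*(Real.log ξ + 4) := by
        have h2 : |(-(2*Real.log ξ * B))| ≤ 12*Real.log ξ := by rw [abs_neg]; exact habsB
        have h3 : |2*Cc| ≤ 96 := by
          rw [abs_mul]
          have : |(2:ℝ)| = 2 := by norm_num
          rw [this]
          nlinarith [hC, abs_nonneg Cc]
        linarith [hmain2, h2, h3, herr]
    _ = 16 + 12*Real.log ξ + 96 + 2*(Real.log ξ + 4) := by ring
  calc |(Real.log ξ)^2/2 * A - 2*Real.log ξ * B + 2*Cc + E - 3/Real.pi^2 * (Real.log ξ)^2|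
      ≤ 16 + 12*Real.log ξ + 96 + 2*(Real.log ξ + 4) := key
  _ ≤ 200 * Real.log ξ := by nlinarith
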